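/- Let α ∈ ℝⁿ be completely irrational (1, α₁, …, α_n linearly independent over ℚ), and let (σ_t) be a sequence of positive reals decreasing to 0. Then there exists a continuous function f : 𝕋ⁿ → ℝ with zero mean value and sup norm at most π, and an integer t₀, such that ∑_{k=0}^{t−1} f(kα) ≥ t·σ_t for all t ≥ t₀. -/

import Mathlib

open Filter MeasureTheory Finset

noncomputable section KochAux

/-- Distance to the nearest integer. -/
def nuK (x : ℝ) : ℝ := |x - round x|

lemma nuK_nonneg (x : ℝ) : 0 ≤ nuK x := abs_nonneg _

lemma nuK_zero : nuK 0 = 0 := by simp [nuK]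

lemma nuK_le (x : ℝ) (m : ℤ) : nuK x ≤ |x - m| := by
  rcases eq_or_ne m (round x) with h | h
  · rw [nuK, h]
  · have h1 : |x - (round x : ℝ)| ≤ 1 / 2 := abs_sub_round x
    have h2 : (1 : ℝ) ≤ |(m : ℝ) - (round x : ℝ)| := by
      have hne : m - round x ≠ 0 := sub_ne_zero.mpr h
      have h3 : (1 : ℤ) ≤ |m - round x| := Int.one_le_abs hne
      have h4 : (1 : ℝ) ≤ |((m - round x : ℤ) : ℝ)| := by
        rw [← Int.cast_abs]; exact_mod_cast h3
      push_cast at h4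
      simpa using h4
    have h3 : |(m : ℝ) - round x| ≤ |(m : ℝ) - x| + |x - round x| := abs_sub_le _ _ _
    have h4 : |(m : ℝ) - x| = |x - m| := abs_sub_comm _ _
    rw [nuK]; linarith

lemma nuK_eq_zero {x : ℝ} (h : nuK x = 0) : ∃ m : ℤ, x = (m : ℝ) :=
  ⟨round x, by rwa [nuK, abs_eq_zero, sub_eq_zero] at h⟩

lemma nuK_add_int (x : ℝ) (m : ℤ) : nuK (x + m) = nuK x := by
  apply le_antisymm
  · calc nuK (x + m) ≤ |x + m - ((round x + m : ℤ) : ℝ)| := nuK_le _ _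
      _ = |x - round x| := by congr 1; push_cast; ring
      _ = nuK x := rfl
  · calc nuK x ≤ |x - ((round (x + (m : ℝ)) - m : ℤ) : ℝ)| := nuK_le _ _
      _ = |x + m - round (x + (m : ℝ))| := by congr 1; push_cast; ring
      _ = nuK (x + m) := rfl

lemma nuK_lip (x y : ℝ) : nuK x ≤ |x - y| + nuK y :=
  calc nuK x ≤ |x - round y| := nuK_le _ _
    _ = |(x - y) + (y - round y)| := by congr 1; ring
    _ ≤ |x - y| + |y - round y| := abs_add_le _ _

/-- The inner infimum of a block function. -/
def innK (ε L β x : ℝ) : ℝ := ⨅ s : ℤ, (ε * |(s : ℝ)| + L * nuK (x - s * β))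

/-- A block transfer function. -/
def psiK (M ε L β x : ℝ) : ℝ := min M (innK ε L β x)

section blocks

variable {M ε L β : ℝ}

lemma innK_bdd (hε : 0 ≤ ε) (hL : 0 ≤ L) (x : ℝ) :
    BddBelow (Set.range fun s : ℤ => ε * |(s : ℝ)| + L * nuK (x - s * β)) := by
  refine ⟨0, ?_⟩
  rintro y ⟨s, rfl⟩
  exact add_nonneg (mul_nonneg hε (abs_nonneg _)) (mul_nonneg hL (nuK_nonneg _))

lemma innK_le (hε : 0 ≤ ε) (hL : 0 ≤ L) (x : ℝ) (s : ℤ) :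
    innK ε L β x ≤ ε * |(s : ℝ)| + L * nuK (x - s * β) :=
  ciInf_le (innK_bdd hε hL x) s

lemma le_innK {c x : ℝ} (h : ∀ s : ℤ, c ≤ ε * |(s : ℝ)| + L * nuK (x - s * β)) :
    c ≤ innK ε L β x := le_ciInf h

lemma innK_nonneg (hε : 0 ≤ ε) (hL : 0 ≤ L) (x : ℝ) : 0 ≤ innK ε L β x :=
  le_innK fun s => add_nonneg (mul_nonneg hε (abs_nonneg _)) (mul_nonneg hL (nuK_nonneg _))

lemma psiK_nonneg (hM : 0 ≤ M) (hε : 0 ≤ ε) (hL : 0 ≤ L) (x : ℝ) : 0 ≤ psiK M ε L β x :=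
  le_min hM (innK_nonneg hε hL x)

lemma psiK_le_term (hε : 0 ≤ ε) (hL : 0 ≤ L) (x : ℝ) (s : ℤ) :
    psiK M ε L β x ≤ ε * |(s : ℝ)| + L * nuK (x - s * β) :=
  (min_le_right _ _).trans (innK_le hε hL x s)

lemma psiK_zero (hM : 0 ≤ M) (hε : 0 ≤ ε) (hL : 0 ≤ L) : psiK M ε L β 0 = 0 := by
  refine le_antisymm ?_ (psiK_nonneg hM hε hL 0)
  have h := psiK_le_term (M := M) (β := β) hε hL 0 0
  simpa [nuK_zero] using h

lemma psiK_le_add (hM : 0 ≤ M) (hε : 0 ≤ ε) (hL : 0 ≤ L) {x y c : ℝ} (hc : 0 ≤ c)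
    (h : ∀ s : ℤ, ∃ s' : ℤ,
      ε * |(s' : ℝ)| + L * nuK (x - s' * β) ≤ ε * |(s : ℝ)| + L * nuK (y - s * β) + c) :
    psiK M ε L β x ≤ psiK M ε L β y + c := by
  have hA : innK ε L β x ≤ innK ε L β y + c := by
    rw [← sub_le_iff_le_add]
    refine le_innK fun s => ?_
    obtain ⟨s', hs'⟩ := h s
    have h2 := (innK_le hε hL x s').trans hs'
    linarith
  rcases le_total M (innK ε L β y) with h1 | h1
  · rw [show psiK M ε L β y = M from min_eq_left h1]
    exact (min_le_left _ _).trans (le_add_of_nonneg_right hc)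
  · rw [show psiK M ε L β y = innK ε L β y from min_eq_right h1]
    exact (min_le_right _ _).trans hA

lemma psiK_lip (hM : 0 ≤ M) (hε : 0 ≤ ε) (hL : 0 ≤ L) (x y : ℝ) :
    psiK M ε L β x ≤ psiK M ε L β y + L * |x - y| := by
  refine psiK_le_add hM hε hL (mul_nonneg hL (abs_nonneg _)) (fun s => ⟨s, ?_⟩)
  have h1 : nuK (x - s * β) ≤ |x - y| + nuK (y - s * β) := by
    have h := nuK_lip (x - s * β) (y - s * β)
    simpa [show x - s * β - (y - s * β) = x - y by ring] using h
  have h2 := mul_le_mul_of_nonneg_left h1 hL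
  rw [mul_add] at h2
  linarith

lemma psiK_continuous (hM : 0 ≤ M) (hε : 0 ≤ ε) (hL : 0 ≤ L) :
    Continuous (psiK M ε L β) := by
  have hlip : LipschitzWith (Real.toNNReal L) (psiK M ε L β) := by
    apply LipschitzWith.of_dist_le_mul
    intro x y
    rw [Real.dist_eq, Real.dist_eq, Real.coe_toNNReal L hL, abs_sub_le_iff]
    have h1 := psiK_lip (β := β) hM hε hL x y
    have h2 := psiK_lip (β := β) hM hε hL y x
    rw [abs_sub_comm] at h2
    constructor <;> linarith
  exact hlip.continuous

lemma psiK_shift_le (hM : 0 ≤ M) (hε : 0 ≤ ε) (hL : 0 ≤ L) (x : ℝ) :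
    psiK M ε L β (x + β) ≤ psiK M ε L β x + ε := by
  refine psiK_le_add hM hε hL hε (fun s => ⟨s + 1, ?_⟩)
  have harg : x + β - ((s + 1 : ℤ) : ℝ) * β = x - s * β := by push_cast; ring
  rw [harg]
  have habs : |((s + 1 : ℤ) : ℝ)| ≤ |(s : ℝ)| + 1 := by
    push_cast
    calc |(s : ℝ) + 1| ≤ |(s : ℝ)| + |(1 : ℝ)| := abs_add_le _ _
      _ = |(s : ℝ)| + 1 := by simp
  have h2 := mul_le_mul_of_nonneg_left habs hε
  rw [mul_add, mul_one] at h2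
  linarith

lemma psiK_le_shift (hM : 0 ≤ M) (hε : 0 ≤ ε) (hL : 0 ≤ L) (x : ℝ) :
    psiK M ε L β x ≤ psiK M ε L β (x + β) + ε := by
  refine psiK_le_add hM hε hL hε (fun s => ⟨s - 1, ?_⟩)
  have harg : x - ((s - 1 : ℤ) : ℝ) * β = x + β - s * β := by push_cast; ring
  rw [harg]
  have habs : |((s - 1 : ℤ) : ℝ)| ≤ |(s : ℝ)| + 1 := by
    push_cast
    calc |(s : ℝ) - 1| ≤ |(s : ℝ)| + |(1 : ℝ)| := abs_sub _ _
      _ = |(s : ℝ)| + 1 := by simp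
  have h2 := mul_le_mul_of_nonneg_left habs hε
  rw [mul_add, mul_one] at h2
  linarith

lemma psiK_abs_shift (hM : 0 ≤ M) (hε : 0 ≤ ε) (hL : 0 ≤ L) (x : ℝ) :
    |psiK M ε L β (x + β) - psiK M ε L β x| ≤ ε := by
  rw [abs_sub_le_iff]
  have h1 := psiK_shift_le (β := β) hM hε hL x
  have h2 := psiK_le_shift (β := β) hM hε hL x
  constructor <;> linarith

lemma psiK_add_int (hM : 0 ≤ M) (hε : 0 ≤ ε) (hL : 0 ≤ L) (x : ℝ) (m : ℤ) :
    psiK M ε L β (x + m) = psiK M ε L β x := by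
  apply le_antisymm
  · have h := psiK_le_add hM hε hL (le_refl 0) (x := x + m) (y := x) (fun s => ⟨s, by
      rw [show x + (m : ℝ) - s * β = (x - s * β) + (m : ℝ) by ring, nuK_add_int, add_zero]⟩)
    simpa using h
  · have h := psiK_le_add hM hε hL (le_refl 0) (x := x) (y := x + m) (fun s => ⟨s, by
      rw [show x + (m : ℝ) - s * β = (x - s * β) + (m : ℝ) by ring, nuK_add_int, add_zero]⟩)
    simpa using h

lemma psiK_le_nat (hε : 0 ≤ ε) (hL : 0 ≤ L) (t : ℕ) :
    psiK M ε L β ((t : ℝ) * β) ≤ ε * t := by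
  have h := psiK_le_term (M := M) (β := β) hε hL ((t : ℝ) * β) (t : ℤ)
  have harg : (t : ℝ) * β - ((t : ℤ) : ℝ) * β = 0 := by push_cast; ring
  rw [harg, nuK_zero, mul_zero, add_zero] at h
  simpa [Nat.abs_cast] using h

lemma psiK_ge (hε : 0 ≤ ε) (hL : 0 ≤ L) {t T : ℕ} (ht : t ≤ T) (hMT : M ≤ ε * T)
    (hB : ∀ s : ℤ, s ≠ 0 → |s| ≤ 2 * (T : ℤ) → M ≤ L * nuK ((s : ℝ) * β)) :
    min M (ε * t) ≤ psiK M ε L β ((t : ℝ) * β) := by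
  refine le_min (min_le_left _ _) (le_innK fun s => ?_)
  have harg : (t : ℝ) * β - s * β = (((t : ℤ) - s : ℤ) : ℝ) * β := by push_cast; ring
  rw [harg]
  rcases eq_or_ne ((t : ℤ) - s) 0 with h0 | h0
  · have hst : s = (t : ℤ) := by omega
    have hval : ε * |(s : ℝ)| + L * nuK ((((t : ℤ) - s : ℤ) : ℝ) * β) = ε * t := by
      rw [h0, hst]
      simp [nuK_zero, Nat.abs_cast]
    rw [hval]
    exact min_le_right _ _
  · rcases le_or_gt |(t : ℤ) - s| (2 * (T : ℤ)) with hs | hs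
    · have h1 := hB _ h0 hs
      have h2 : 0 ≤ ε * |(s : ℝ)| := mul_nonneg hε (abs_nonneg _)
      calc min M (ε * t) ≤ M := min_le_left _ _
        _ ≤ L * nuK ((((t : ℤ) - s : ℤ) : ℝ) * β) := h1
        _ ≤ ε * |(s : ℝ)| + L * nuK ((((t : ℤ) - s : ℤ) : ℝ) * β) := le_add_of_nonneg_left h2
    · have h1 : |(t : ℤ)| = (t : ℤ) := abs_of_nonneg (by positivity)
      have h4 : |(t : ℤ) - s| ≤ |(t : ℤ)| + |s| := abs_sub _ _
      have h5 : (t : ℤ) ≤ (T : ℤ) := by exact_mod_cast ht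
      have h3 : (T : ℤ) ≤ |s| := by
        rw [h1] at h4
        linarith
      have h6 : (T : ℝ) ≤ |(s : ℝ)| := by
        rw [← Int.cast_abs]
        exact_mod_cast h3
      calc min M (ε * t) ≤ M := min_le_left _ _
        _ ≤ ε * T := hMT
        _ ≤ ε * |(s : ℝ)| := mul_le_mul_of_nonneg_left h6 hε
        _ ≤ _ := le_add_of_nonneg_right (mul_nonneg hL (nuK_nonneg _))

end blocks
end KochAux
open Filter MeasureTheory Finset

noncomputable section KochAux2

lemma integral_cube_eval {n : ℕ} (i₀ : Fin n) (g : ℝ → ℝ) (hg : Continuous g) :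
    ∫ x in Set.Icc (0 : Fin n → ℝ) 1, g (x i₀) = ∫ u in Set.Icc (0 : ℝ) 1, g u := by
  have hmeas : MeasurableSet (Set.Icc (0 : Fin n → ℝ) 1) := measurableSet_Icc
  rw [← MeasureTheory.integral_indicator hmeas]
  have key : ∀ x : Fin n → ℝ, (Set.Icc (0 : Fin n → ℝ) 1).indicator (fun x => g (x i₀)) x
      = ∏ i, (Set.Icc (0 : ℝ) 1).indicator (fun u => if i = i₀ then g u else 1) (x i) := by
    intro x
    by_cases hx : x ∈ Set.Icc (0 : Fin n → ℝ) 1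
    · rw [Set.indicator_of_mem hx]
      have hxi : ∀ i, x i ∈ Set.Icc (0 : ℝ) 1 := fun i => ⟨hx.1 i, hx.2 i⟩
      rw [Finset.prod_congr rfl (fun i _ => Set.indicator_of_mem (hxi i) _)]
      rw [Finset.prod_ite_eq' Finset.univ i₀ (fun i => g (x i))]
      simp
    · rw [Set.indicator_of_notMem hx]
      have hex : ¬ ∀ i, x i ∈ Set.Icc (0 : ℝ) 1 := by
        intro hall
        exact hx ⟨fun i => (hall i).1, fun i => (hall i).2⟩
      push_neg at hex
      obtain ⟨i, hi⟩ := hex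
      symm
      apply Finset.prod_eq_zero (Finset.mem_univ i)
      rw [Set.indicator_of_notMem hi]
  simp_rw [key]
  rw [MeasureTheory.integral_fintype_prod_volume_eq_prod (ι := Fin n)
    (f := fun i u => (Set.Icc (0 : ℝ) 1).indicator (fun u => if i = i₀ then g u else 1) u)]
  rw [Finset.prod_eq_single i₀ ?_ (by simp)]
  · simp only [if_pos rfl]
    rw [MeasureTheory.integral_indicator measurableSet_Icc]
    simp
  · intro i _ hne
    simp only [if_neg hne]
    rw [MeasureTheory.integral_indicator_const (1 : ℝ) measurableSet_Icc]
    simp [Real.volume_Icc]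

lemma block_integral_zero (ψ : ℝ → ℝ) (hcont : Continuous ψ)
    (hper : ∀ x : ℝ, ψ (x + 1) = ψ x) (β : ℝ) :
    ∫ u in Set.Icc (0 : ℝ) 1, (ψ (u + β) - ψ u) = 0 := by
  have h1 : ∀ c : ℝ, IntegrableOn (fun u => ψ (u + c)) (Set.Icc (0 : ℝ) 1) := by
    intro c
    exact (hcont.comp (continuous_add_right c)).integrableOn_Icc
  have h0 : IntegrableOn ψ (Set.Icc (0 : ℝ) 1) := hcont.integrableOn_Icc
  rw [MeasureTheory.integral_sub (h1 β) h0]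
  have hper' : Function.Periodic ψ 1 := hper
  have e1 : ∫ u in Set.Icc (0 : ℝ) 1, ψ (u + β) = ∫ u in Set.Icc (0 : ℝ) 1, ψ u := by
    rw [MeasureTheory.integral_Icc_eq_integral_Ioc, MeasureTheory.integral_Icc_eq_integral_Ioc,
      ← intervalIntegral.integral_of_le zero_le_one, ← intervalIntegral.integral_of_le zero_le_one,
      intervalIntegral.integral_comp_add_right (fun u => ψ u) β]
    have h2 := hper'.intervalIntegral_add_eq β 0
    simpa [zero_add, add_comm] using h2
  rw [e1, sub_self]

end KochAux2

open Filter MeasureTheory Finset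

theorem stmt_6 {n : ℕ} (hn : 1 ≤ n) (α : Fin n → ℝ)
    (hirr : ∀ (m : Fin n → ℤ) (c : ℤ),
      (∑ i, (m i : ℝ) * α i) + (c : ℝ) = 0 → m = 0 ∧ c = 0)
    (σ : ℕ → ℝ) (hσpos : ∀ t, 0 < σ t) (hσanti : Antitone σ)
    (hσ0 : Filter.Tendsto σ Filter.atTop (nhds 0)) :
    ∃ f : (Fin n → ℝ) → ℝ, Continuous f ∧
      (∀ (x : Fin n → ℝ) (v : Fin n → ℤ), f (x + fun i => (v i : ℝ)) = f x) ∧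
      (∫ x in Set.Icc (0 : Fin n → ℝ) 1, f x) = 0 ∧
      (∀ x, |f x| ≤ Real.pi) ∧
      ∃ t₀ : ℕ, ∀ t ≥ t₀,
        (t : ℝ) * σ t ≤ ∑ k ∈ Finset.range t, f (fun i => (k : ℝ) * α i) := by
  classical
  have hn0 : 0 < n := hn
  set i₀ : Fin n := ⟨0, hn0⟩ with hi₀
  set β : ℝ := α i₀ with hβ
  -- irrationality of β
  have hirr2 : ∀ s : ℤ, s ≠ 0 → 0 < nuK ((s : ℝ) * β) := by
    intro s hs
    rcases (nuK_nonneg ((s : ℝ) * β)).lt_or_eq with h | h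
    · exact h
    · exfalso
      obtain ⟨m, hm⟩ := nuK_eq_zero h.symm
      have hsum : (∑ i, (((fun i => if i = i₀ then s else 0) i : ℤ) : ℝ) * α i)
          + ((-m : ℤ) : ℝ) = 0 := by
        rw [Finset.sum_eq_single i₀]
        · simp only [if_pos rfl]
          push_cast
          show (s : ℝ) * β + -(m : ℝ) = 0
          rw [hm]; ring
        · intro i _ hne
          simp [hne]
        · intro h; exact absurd (Finset.mem_univ i₀) h
      have := (hirr _ _ hsum).1
      have h2 := congrFun this i₀
      simp only [if_pos rfl] at h2
      exact hs h2
  -- the ε sequence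
  set E : ℕ → ℝ := fun j => Real.pi / 4 * (1 / 2) ^ j with hE
  have hEpos : ∀ j, 0 < E j := by
    intro j
    have := Real.pi_pos
    positivity
  have hEsummable : Summable E := summable_geometric_two.mul_left _
  have hEtsum : ∑' j, E j = Real.pi / 2 := by
    rw [hE, tsum_mul_left, tsum_geometric_two]; ring
  -- choose thresholds
  have hNex : ∀ j : ℕ, ∃ N : ℕ, ∀ t, N ≤ t → σ t ≤ E j := by
    intro j
    have h1 : ∀ᶠ t in atTop, σ t < E j := hσ0.eventually (gt_mem_nhds (hEpos j))
    obtain ⟨N, hN⟩ := eventually_atTop.mp h1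
    exact ⟨N, fun t ht => (hN t ht).le⟩
  choose N hN using hNex
  -- the recursive sequence a
  set a : ℕ → ℕ := fun j => Nat.rec (max (N 0) 1) (fun j ih => max (N (j + 1)) (ih + 1)) j
    with ha
  have ha0 : a 0 = max (N 0) 1 := rfl
  have hasucc : ∀ j, a (j + 1) = max (N (j + 1)) (a j + 1) := fun j => rfl
  have haN : ∀ j, N j ≤ a j := by
    intro j
    cases j with
    | zero => rw [ha0]; exact le_max_left _ _
    | succ j => rw [hasucc]; exact le_max_left _ _
  have hamono : ∀ j, a j + 1 ≤ a (j + 1) := fun j => by rw [hasucc]; exact le_max_right _ _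
  have ha1 : ∀ j, 1 ≤ a j := by
    intro j
    induction j with
    | zero => rw [ha0]; exact le_max_right _ _
    | succ j ih => have := hamono j; omega
  have hagrow : ∀ j, j + 1 ≤ a j := by
    intro j
    induction j with
    | zero => exact ha1 0
    | succ j ih => have := hamono j; omega
  have hσa : ∀ j, σ (a j) ≤ E j := fun j => hN j _ (haN j)
  -- coverage
  have hcover : ∀ t : ℕ, a 0 ≤ t → ∃ J, a J ≤ t ∧ t ≤ a (J + 1) := by
    intro t ht
    set P : ℕ → Prop := fun j => a j ≤ t with hP
    set J := Nat.findGreatest P t with hJ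
    have hJle : P J := Nat.findGreatest_spec (P := P) (Nat.zero_le t) ht
    refine ⟨J, hJle, ?_⟩
    by_contra hlt
    push_neg at hlt
    have h1 : a (J + 1) ≤ t := le_of_lt hlt
    have h2 : J + 1 ≤ t := by have := hagrow (J + 1); omega
    exact Nat.findGreatest_is_greatest (P := P) (Nat.lt_succ_self J) h2 h1
  -- block parameters
  set M : ℕ → ℝ := fun j => (a (j + 1) : ℝ) * σ (a j) with hMdef
  have hMpos : ∀ j, 0 < M j := by
    intro j
    have h1 : (0 : ℝ) < (a (j + 1) : ℝ) := by
      have h0 : 0 < a (j + 1) := Nat.lt_of_lt_of_le Nat.zero_lt_one (ha1 (j + 1))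
      exact_mod_cast h0
    exact mul_pos h1 (hσpos _)
  -- gamma
  have hSne : ∀ j : ℕ, ((Finset.Icc (-(2 * (a (j + 1) : ℤ))) (2 * (a (j + 1) : ℤ))).erase 0).Nonempty := by
    intro j
    refine ⟨1, Finset.mem_erase.mpr ⟨one_ne_zero, Finset.mem_Icc.mpr ⟨?_, ?_⟩⟩⟩
    · have := ha1 (j + 1); omega
    · have := ha1 (j + 1); omega
  set γ : ℕ → ℝ := fun j =>
    ((Finset.Icc (-(2 * (a (j + 1) : ℤ))) (2 * (a (j + 1) : ℤ))).erase 0).inf' (hSne j)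
      (fun s => nuK ((s : ℝ) * β)) with hγdef
  have hγpos : ∀ j, 0 < γ j := by
    intro j
    rw [hγdef]
    rw [Finset.lt_inf'_iff]
    intro s hsmem
    exact hirr2 s (Finset.mem_erase.mp hsmem).1
  set L : ℕ → ℝ := fun j => M j / γ j with hLdef
  have hLnonneg : ∀ j, 0 ≤ L j := fun j => div_nonneg (hMpos j).le (hγpos j).le
  have hLB : ∀ j, ∀ s : ℤ, s ≠ 0 → |s| ≤ 2 * ((a (j + 1) : ℕ) : ℤ) →
      M j ≤ L j * nuK ((s : ℝ) * β) := by
    intro j s hs habs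
    have hmem : s ∈ ((Finset.Icc (-(2 * (a (j + 1) : ℤ))) (2 * (a (j + 1) : ℤ))).erase 0) := by
      refine Finset.mem_erase.mpr ⟨hs, Finset.mem_Icc.mpr ?_⟩
      rw [abs_le] at habs
      exact habs
    have h1 : γ j ≤ nuK ((s : ℝ) * β) := by
      rw [hγdef]; exact Finset.inf'_le _ hmem
    calc M j = M j / γ j * γ j := (div_mul_cancel₀ _ (hγpos j).ne').symm
      _ ≤ L j * nuK ((s : ℝ) * β) := mul_le_mul_of_nonneg_left h1 (hLnonneg j)
  -- the blocks
  set Ψ : ℕ → ℝ → ℝ := fun j => psiK (M j) (E j) (L j) β with hΨdef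
  have hΨcont : ∀ j, Continuous (Ψ j) := fun j =>
    psiK_continuous (hMpos j).le (hEpos j).le (hLnonneg j)
  have hΨnonneg : ∀ j x, 0 ≤ Ψ j x := fun j x =>
    psiK_nonneg (hMpos j).le (hEpos j).le (hLnonneg j) x
  have hΨzero : ∀ j, Ψ j 0 = 0 := fun j =>
    psiK_zero (hMpos j).le (hEpos j).le (hLnonneg j)
  have hΨper : ∀ j (x : ℝ) (m : ℤ), Ψ j (x + m) = Ψ j x := fun j x m =>
    psiK_add_int (hMpos j).le (hEpos j).le (hLnonneg j) x m
  set F : ℕ → ℝ → ℝ := fun j u => Ψ j (u + β) - Ψ j u with hFdef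
  have hFbound : ∀ j u, |F j u| ≤ E j := fun j u =>
    psiK_abs_shift (hMpos j).le (hEpos j).le (hLnonneg j) u
  have hFcont : ∀ j, Continuous (F j) :=
    fun j => ((hΨcont j).comp (continuous_add_right β)).sub (hΨcont j)
  set f : (Fin n → ℝ) → ℝ := fun x => ∑' j, F j (x i₀) with hfdef
  -- summability facts
  have hsumF : ∀ u : ℝ, Summable fun j => F j u := by
    intro u
    apply Summable.of_norm_bounded hEsummable
    intro j
    rw [Real.norm_eq_abs]
    exact hFbound j u
  have hsumΨt : ∀ t : ℕ, Summable fun j => Ψ j ((t : ℝ) * β) := by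
    intro t
    apply Summable.of_nonneg_of_le (fun j => hΨnonneg j _)
      (fun j => psiK_le_nat (hEpos j).le (hLnonneg j) t)
    exact hEsummable.mul_right _
  refine ⟨f, ?_, ?_, ?_, ?_, a 0, ?_⟩
  · -- continuity
    apply continuous_tsum (fun j => (hFcont j).comp (continuous_apply i₀)) hEsummable
    intro j x
    rw [Real.norm_eq_abs]
    exact hFbound j (x i₀)
  · -- periodicity
    intro x v
    simp only [hfdef]
    apply tsum_congr
    intro j
    simp only [hFdef]
    have harg : (x + fun i => ((v i : ℤ) : ℝ)) i₀ = x i₀ + ((v i₀ : ℤ) : ℝ) := rfl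
    rw [harg, show x i₀ + ((v i₀ : ℤ) : ℝ) + β = (x i₀ + β) + ((v i₀ : ℤ) : ℝ) from by ring,
      hΨper j (x i₀ + β) (v i₀), hΨper j (x i₀) (v i₀)]
  · -- integral zero
    have hvol : volume (Set.Icc (0 : Fin n → ℝ) 1) = 1 := by
      rw [Real.volume_Icc_pi]
      simp
    have hmeas_j : ∀ j : ℕ, AEStronglyMeasurable (fun x : Fin n → ℝ => F j (x i₀))
        (volume.restrict (Set.Icc (0 : Fin n → ℝ) 1)) :=
      fun j => ((hFcont j).comp (continuous_apply i₀)).aestronglyMeasurable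
    have hbound : ∑' j, ∫⁻ x in Set.Icc (0 : Fin n → ℝ) 1, ‖F j (x i₀)‖₊ ≠ ⊤ := by
      have hle : ∀ j : ℕ, ∫⁻ x in Set.Icc (0 : Fin n → ℝ) 1, (‖F j (x i₀)‖₊ : ENNReal)
          ≤ ENNReal.ofReal (E j) := by
        intro j
        have hptw : ∀ x : Fin n → ℝ, (‖F j (x i₀)‖₊ : ENNReal) ≤ ENNReal.ofReal (E j) := by
          intro x
          rw [← enorm_eq_nnnorm, ← ofReal_norm]
          exact ENNReal.ofReal_le_ofReal
            (by rw [Real.norm_eq_abs]; exact hFbound j (x i₀))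
        calc ∫⁻ x in Set.Icc (0 : Fin n → ℝ) 1, (‖F j (x i₀)‖₊ : ENNReal)
            ≤ ∫⁻ _x in Set.Icc (0 : Fin n → ℝ) 1, ENNReal.ofReal (E j) :=
              lintegral_mono (fun x => hptw x)
          _ = ENNReal.ofReal (E j) := by
            rw [MeasureTheory.lintegral_const, Measure.restrict_apply_univ, hvol, mul_one]
      have h2 : ∑' j, ∫⁻ x in Set.Icc (0 : Fin n → ℝ) 1, (‖F j (x i₀)‖₊ : ENNReal)
          ≤ ENNReal.ofReal (Real.pi / 2) := by
        calc _ ≤ ∑' j, ENNReal.ofReal (E j) := ENNReal.tsum_le_tsum hle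
          _ = ENNReal.ofReal (Real.pi / 2) := by
            rw [← ENNReal.ofReal_tsum_of_nonneg (fun j => (hEpos j).le) hEsummable, hEtsum]
      exact ne_top_of_le_ne_top ENNReal.ofReal_ne_top h2
    simp only [hfdef]
    rw [MeasureTheory.integral_tsum hmeas_j hbound]
    have hper1 : ∀ j (x : ℝ), Ψ j (x + 1) = Ψ j x := by
      intro j x
      have := hΨper j x 1
      simpa using this
    have hzero : ∀ j : ℕ, ∫ x in Set.Icc (0 : Fin n → ℝ) 1, F j (x i₀) = 0 := by
      intro j
      rw [integral_cube_eval i₀ (F j) (hFcont j)]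
      exact block_integral_zero (Ψ j) (hΨcont j) (hper1 j) β
    simp only [hzero, tsum_zero]
  · -- sup bound
    intro x
    have hnormsum : Summable fun j => ‖F j (x i₀)‖ := by
      apply Summable.of_nonneg_of_le (fun j => norm_nonneg _) _ hEsummable
      intro j
      rw [Real.norm_eq_abs]
      exact hFbound j (x i₀)
    calc |f x| = ‖f x‖ := (Real.norm_eq_abs _).symm
      _ ≤ ∑' j, ‖F j (x i₀)‖ := norm_tsum_le_tsum_norm hnormsum
      _ ≤ ∑' j, E j := Summable.tsum_le_tsum (fun j => by rw [Real.norm_eq_abs]; exact hFbound j (x i₀))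
          hnormsum hEsummable
      _ = Real.pi / 2 := hEtsum
      _ ≤ Real.pi := by linarith [Real.pi_pos]
  · -- main estimate
    intro t ht
    -- rewrite the Birkhoff sum
    have hpt : ∀ k : ℕ, (fun i => (k : ℝ) * α i) i₀ = (k : ℝ) * β := fun k => rfl
    have hswap : ∑ k ∈ Finset.range t, f (fun i => (k : ℝ) * α i)
        = ∑' j, ∑ k ∈ Finset.range t, F j ((k : ℝ) * β) := by
      have h1 : ∑ k ∈ Finset.range t, f (fun i => (k : ℝ) * α i)
          = ∑ k ∈ Finset.range t, ∑' j, F j ((k : ℝ) * β) := by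
        apply Finset.sum_congr rfl
        intro k _
        simp only [hfdef]; rfl
      rw [h1]
      exact (Summable.tsum_finsetSum (f := fun (k : ℕ) (j : ℕ) => F j ((k : ℝ) * β)) (s := Finset.range t)
        (fun k _ => hsumF ((k : ℝ) * β))).symm
    have htel : ∀ j, ∑ k ∈ Finset.range t, F j ((k : ℝ) * β) = Ψ j ((t : ℝ) * β) := by
      intro j
      have hstep : ∀ k : ℕ, F j ((k : ℝ) * β)
          = Ψ j (((k + 1 : ℕ) : ℝ) * β) - Ψ j ((k : ℝ) * β) := by
        intro k
        simp only [hFdef]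
        rw [show ((k + 1 : ℕ) : ℝ) * β = (k : ℝ) * β + β from by push_cast; ring]
      rw [Finset.sum_congr rfl (fun k _ => hstep k),
        Finset.sum_range_sub (fun k => Ψ j ((k : ℝ) * β))]
      norm_num
      rw [hΨzero j]
    rw [hswap]
    simp only [htel]
    obtain ⟨J, hJ1, hJ2⟩ := hcover t ht
    have hMT : M J ≤ E J * (a (J + 1) : ℕ) := by
      rw [hMdef]
      calc (a (J + 1) : ℝ) * σ (a J) ≤ (a (J + 1) : ℝ) * E J := by
            apply mul_le_mul_of_nonneg_left (hσa J) (by positivity)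
        _ = E J * (a (J + 1) : ℝ) := mul_comm _ _
    have hmain : min (M J) (E J * t) ≤ Ψ J ((t : ℝ) * β) :=
      psiK_ge (hEpos J).le (hLnonneg J) hJ2 hMT (hLB J)
    have h2 : (t : ℝ) * σ t ≤ min (M J) (E J * t) := by
      apply le_min
      · rw [hMdef]
        have h3 : σ t ≤ σ (a J) := hσanti hJ1
        have h4 : (t : ℝ) ≤ (a (J + 1) : ℝ) := by exact_mod_cast hJ2
        have h5 : (0 : ℝ) ≤ (t : ℝ) := by positivity
        exact mul_le_mul h4 h3 (hσpos t).le (by positivity)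
      · have h3 : σ t ≤ E J := (hσanti hJ1).trans (hσa J)
        calc (t : ℝ) * σ t ≤ (t : ℝ) * E J :=
              mul_le_mul_of_nonneg_left h3 (by positivity)
          _ = E J * t := mul_comm _ _
    have h5 : Ψ J ((t : ℝ) * β) ≤ ∑' j, Ψ j ((t : ℝ) * β) :=
      Summable.le_tsum (hsumΨt t) J (fun j _ => hΨnonneg j _)
    linarith
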